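/- With R the presented MU_*-algebra as above, the assignment ρ(u) = u, ρ(d_{l,j}^{(i)}) = Σ_{k≥0} t_{l,j+k}^{(i)} u^k, ρ(q_j) = Σ_{k≥0} c_{j+k} u^k, ρ(η_i) = Σ_{k≥0} a_{0,1+k}^{(i)} u^k defines a well-defined MU_*-algebra homomorphism ρ : R → MU_*[[u]]/([p]u), i.e. these assignments satisfy all seven defining relations of R. -/

import Mathlib

open PowerSeries Finset

/-- Substitution of two power series with zero constant term into a two-variable series
with coefficients `a k j`:  `F(f,g) = Σ_{k,j} a k j * f^k * g^j`. -/
noncomputable def Fsub (A : Type) [CommRing A] (a : ℕ → ℕ → A)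
    (f g : PowerSeries A) : PowerSeries A :=
  PowerSeries.mk fun n => ∑ k ∈ Finset.range (n + 1), ∑ j ∈ Finset.range (n + 1),
    a k j * PowerSeries.coeff n (f ^ k * g ^ j)

/-- The `n`-series `[n](u)` of the formal group law with coefficients `a`. -/
noncomputable def nser (A : Type) [CommRing A] (a : ℕ → ℕ → A) : ℕ → PowerSeries A
  | 0 => 0
  | n + 1 => Fsub A a (nser A a n) PowerSeries.X

/-- `a : ℕ → ℕ → A` is the coefficient family of a commutative one-dimensional formal
group law `F(x,y) = Σ a k j x^k y^j`: `F(x,0) = x`, `F(0,y) = y`, `F` commutative and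
associative (associativity expressed on all substituted triples of power series with zero
constant term). -/
def IsFGL (A : Type) [CommRing A] (a : ℕ → ℕ → A) : Prop :=
  (∀ k, a k 0 = if k = 1 then 1 else 0) ∧
  (∀ j, a 0 j = if j = 1 then 1 else 0) ∧
  (∀ k j, a k j = a j k) ∧
  (∀ f g h : PowerSeries A,
    PowerSeries.constantCoeff f = 0 → PowerSeries.constantCoeff g = 0 →
    PowerSeries.constantCoeff h = 0 →
    Fsub A a (Fsub A a f g) h = Fsub A a f (Fsub A a g h))

/-- Composition `f(g(u))` of one-variable power series (`g` with zero constant term). -/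
noncomputable def pscomp (A : Type) [CommRing A] (f g : PowerSeries A) : PowerSeries A :=
  PowerSeries.mk fun n => ∑ k ∈ Finset.range (n + 1),
    PowerSeries.coeff k f * PowerSeries.coeff n (g ^ k)

section Helpers
variable {A : Type} [CommRing A]

lemma cpz {g : PowerSeries A} (hg : constantCoeff g = 0) {k n : ℕ} (h : n < k) :
    coeff n (g ^ k) = 0 := by
  have : (X : PowerSeries A) ^ k ∣ g ^ k :=
    pow_dvd_pow_of_dvd (PowerSeries.X_dvd_iff.mpr hg) k
  exact PowerSeries.X_pow_dvd_iff.mp this n h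

lemma cppz {f g : PowerSeries A} (hf : constantCoeff f = 0)
    (hg : constantCoeff g = 0) {k j n : ℕ} (h : n < k + j) :
    coeff n (f ^ k * g ^ j) = 0 := by
  have : (X : PowerSeries A) ^ (k + j) ∣ f ^ k * g ^ j := by
    rw [pow_add]
    exact mul_dvd_mul (pow_dvd_pow_of_dvd (PowerSeries.X_dvd_iff.mpr hf) k)
      (pow_dvd_pow_of_dvd (PowerSeries.X_dvd_iff.mpr hg) j)
  exact PowerSeries.X_pow_dvd_iff.mp this n h

lemma coeff_Fsub (a : ℕ → ℕ → A) (f g : PowerSeries A) (n : ℕ) :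
    coeff n (Fsub A a f g) =
      ∑ k ∈ range (n + 1), ∑ j ∈ range (n + 1), a k j * coeff n (f ^ k * g ^ j) := by
  simp [Fsub]

lemma coeff_Fsub_ext (a : ℕ → ℕ → A) {f g : PowerSeries A}
    (hf : constantCoeff f = 0) (hg : constantCoeff g = 0) {n N : ℕ} (h : n ≤ N) :
    coeff n (Fsub A a f g) =
      ∑ k ∈ range (N + 1), ∑ j ∈ range (N + 1), a k j * coeff n (f ^ k * g ^ j) := by
  rw [coeff_Fsub, ← Finset.sum_product', ← Finset.sum_product']
  apply Finset.sum_subset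
  · exact Finset.product_subset_product
      (Finset.range_subset_range.2 (by omega)) (Finset.range_subset_range.2 (by omega))
  · intro x hx hx'
    have hn : n < x.1 + x.2 := by
      simp only [Finset.mem_product, Finset.mem_range] at hx hx'
      omega
    rw [cppz hf hg hn, mul_zero]

lemma coeff_pscomp (f g : PowerSeries A) (n : ℕ) :
    coeff n (pscomp A f g) =
      ∑ k ∈ range (n + 1), coeff k f * coeff n (g ^ k) := by
  simp [pscomp]

lemma coeff_pscomp_ext {g : PowerSeries A} (f : PowerSeries A)
    (hg : constantCoeff g = 0) {n N : ℕ} (h : n ≤ N) :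
    coeff n (pscomp A f g) =
      ∑ k ∈ range (N + 1), coeff k f * coeff n (g ^ k) := by
  rw [coeff_pscomp]
  apply Finset.sum_subset (Finset.range_subset_range.2 (by omega))
  intro k hk hk'
  simp only [Finset.mem_range] at hk hk'
  rw [cpz hg (by omega), mul_zero]


noncomputable def shiftPS (A : Type) [CommRing A] (f : PowerSeries A) : PowerSeries A :=
  PowerSeries.mk fun n => coeff (n + 1) f

lemma X_mul_shiftPS {f : PowerSeries A} (hf : constantCoeff f = 0) :
    X * shiftPS A f = f := by
  ext n
  cases n with
  | zero => simp [hf]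
  | succ n => simp [coeff_succ_X_mul, shiftPS]

lemma constantCoeff_shiftPS (f : PowerSeries A) :
    constantCoeff (shiftPS A f) = coeff 1 f := by
  rw [← coeff_zero_eq_constantCoeff_apply]; simp [shiftPS]

lemma X_mul_cancel {f g : PowerSeries A} (h : X * f = X * g) : f = g := by
  ext n
  have := congrArg (coeff (n + 1)) h
  simpa [coeff_succ_X_mul] using this

lemma constantCoeff_Fsub (a : ℕ → ℕ → A) (f g : PowerSeries A) :
    constantCoeff (Fsub A a f g) = a 0 0 := by
  rw [← coeff_zero_eq_constantCoeff_apply, coeff_Fsub]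
  simp

lemma Fsub_zero_right {a : ℕ → ℕ → A} (hFGL : IsFGL A a) {f : PowerSeries A}
    (hf : constantCoeff f = 0) : Fsub A a f 0 = f := by
  ext n
  rw [coeff_Fsub]
  have hinner : ∀ k ∈ range (n + 1),
      (∑ j ∈ range (n + 1), a k j * coeff n (f ^ k * (0 : PowerSeries A) ^ j))
        = a k 0 * coeff n (f ^ k) := by
    intro k _
    rw [Finset.sum_eq_single_of_mem 0 (Finset.mem_range.2 (by omega))]
    · simp
    · intro j _ hj
      rw [zero_pow hj, mul_zero, map_zero, mul_zero]
  rw [Finset.sum_congr rfl hinner]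
  have : ∀ k ∈ range (n + 1), a k 0 * coeff n (f ^ k)
      = if k = 1 then coeff n (f ^ k) else 0 := by
    intro k _
    rw [hFGL.1 k]
    split <;> simp
  rw [Finset.sum_congr rfl this, Finset.sum_ite_eq' (range (n + 1)) 1
    (fun k => coeff n (f ^ k))]
  split
  · simp
  · rename_i hmem
    have : n = 0 := by
      simp only [Finset.mem_range] at hmem; omega
    subst this
    simpa using hf.symm

lemma Fsub_zero_left {a : ℕ → ℕ → A} (hFGL : IsFGL A a) {g : PowerSeries A}
    (hg : constantCoeff g = 0) : Fsub A a 0 g = g := by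
  ext n
  rw [coeff_Fsub]
  have hinner : ∀ k ∈ range (n + 1),
      (∑ j ∈ range (n + 1), a k j * coeff n ((0 : PowerSeries A) ^ k * g ^ j))
        = if k = 0 then ∑ j ∈ range (n + 1), a 0 j * coeff n (g ^ j) else 0 := by
    intro k _
    split
    · rename_i h; subst h; simp
    · rename_i h
      apply Finset.sum_eq_zero
      intro j _
      rw [zero_pow h, zero_mul, map_zero, mul_zero]
  rw [Finset.sum_congr rfl hinner, Finset.sum_ite_eq' (range (n + 1)) 0 _]
  rw [if_pos (Finset.mem_range.2 (by omega))]
  have : ∀ j ∈ range (n + 1), a 0 j * coeff n (g ^ j)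
      = if j = 1 then coeff n (g ^ j) else 0 := by
    intro j _
    rw [hFGL.2.1 j]
    split <;> simp
  rw [Finset.sum_congr rfl this, Finset.sum_ite_eq' (range (n + 1)) 1
    (fun j => coeff n (g ^ j))]
  split
  · simp
  · rename_i hmem
    have : n = 0 := by
      simp only [Finset.mem_range] at hmem; omega
    subst this
    simpa using hg.symm

lemma constantCoeff_nser {a : ℕ → ℕ → A} (hFGL : IsFGL A a) (n : ℕ) :
    constantCoeff (nser A a n) = 0 := by
  cases n with
  | zero => simp [nser]
  | succ n =>
    rw [nser, constantCoeff_Fsub, hFGL.1 0]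
    simp

lemma nser_one {a : ℕ → ℕ → A} (hFGL : IsFGL A a) : nser A a 1 = X := by
  show Fsub A a (nser A a 0) X = X
  rw [show nser A a 0 = 0 from rfl]
  exact Fsub_zero_left hFGL PowerSeries.constantCoeff_X

lemma nser_add {a : ℕ → ℕ → A} (hFGL : IsFGL A a) (m n : ℕ) :
    nser A a (m + n) = Fsub A a (nser A a m) (nser A a n) := by
  induction n with
  | zero => simpa [show nser A a 0 = 0 from rfl] using (Fsub_zero_right hFGL (constantCoeff_nser hFGL m)).symm
  | succ n ih =>
    have : m + (n + 1) = (m + n) + 1 := by omega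
    rw [this]
    show Fsub A a (nser A a (m + n)) X = _
    rw [ih, hFGL.2.2.2 _ _ _ (constantCoeff_nser hFGL m) (constantCoeff_nser hFGL n)
      PowerSeries.constantCoeff_X]
    rfl

lemma coeff_one_nser {a : ℕ → ℕ → A} (hFGL : IsFGL A a) (n : ℕ) :
    coeff 1 (nser A a n) = (n : A) := by
  induction n with
  | zero => simp [nser]
  | succ n ih =>
    show coeff 1 (Fsub A a (nser A a n) X) = _
    rw [coeff_Fsub]
    rw [show (1:ℕ) + 1 = 2 from rfl]
    simp only [Finset.sum_range_succ, Finset.sum_range_zero]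
    rw [hFGL.1 0, hFGL.1 1, hFGL.2.1 1]
    have h11 : coeff 1 (nser A a n ^ 1 * (X : PowerSeries A) ^ 1) = 0 :=
      cppz (constantCoeff_nser hFGL n) PowerSeries.constantCoeff_X (by omega)
    simp [h11, ih, constantCoeff_nser hFGL]
    push_cast
    ring
end Helpers

section Helpers2
variable {A : Type} [CommRing A]

lemma sum_range_antidiagonal {M : Type} [AddCommMonoid M] (n : ℕ) (F : ℕ × ℕ → M)
    (hF : ∀ p : ℕ × ℕ, n < p.1 + p.2 → F p = 0) :
    ∑ k ∈ range (n + 1), ∑ p ∈ Finset.HasAntidiagonal.antidiagonal k, F p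
      = ∑ p ∈ range (n + 1) ×ˢ range (n + 1), F p := by
  rw [Finset.sum_sigma' (range (n + 1)) (fun k => Finset.HasAntidiagonal.antidiagonal k) (fun _ p => F p)]
  rw [← Finset.sum_subset
    (Finset.filter_subset (fun p : ℕ × ℕ => p.1 + p.2 ≤ n) (range (n + 1) ×ˢ range (n + 1)))
    (fun p hq hp => hF p (Nat.lt_of_not_le (fun hle => hp (Finset.mem_filter.2 ⟨hq, hle⟩))))]
  apply Finset.sum_bij' (i := fun p _ => p.2)
    (j := fun q _ => (⟨q.1 + q.2, q⟩ : Σ _ : ℕ, ℕ × ℕ))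
  · intro p hp
    rw [Finset.mem_sigma] at hp
    obtain ⟨h1, h2⟩ := hp
    rw [Finset.mem_range] at h1
    rw [Finset.HasAntidiagonal.mem_antidiagonal] at h2
    rw [Finset.mem_filter, Finset.mem_product, Finset.mem_range, Finset.mem_range]
    omega
  · intro q hq
    rw [Finset.mem_filter] at hq
    rw [Finset.mem_sigma, Finset.mem_range, Finset.HasAntidiagonal.mem_antidiagonal]
    exact ⟨show q.1 + q.2 < n + 1 by omega, rfl⟩
  · intro p hp
    rw [Finset.mem_sigma, Finset.HasAntidiagonal.mem_antidiagonal] at hp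
    exact Sigma.ext (by simp [hp.2]) (by simp)
  · intro q _; rfl
  · intro p _; rfl

lemma pscomp_zero (g : PowerSeries A) : pscomp A 0 g = 0 := by
  ext n; simp [coeff_pscomp]

lemma pscomp_one (g : PowerSeries A) : pscomp A 1 g = 1 := by
  ext n
  rw [coeff_pscomp]
  have : ∀ k ∈ range (n + 1), coeff k (1 : PowerSeries A) * coeff n (g ^ k)
      = if k = 0 then coeff n (1 : PowerSeries A) else 0 := by
    intro k _
    rw [PowerSeries.coeff_one]
    split
    · rename_i h; subst h; simp
    · simp
  rw [Finset.sum_congr rfl this, Finset.sum_ite_eq' (range (n + 1)) 0 _,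
    if_pos (Finset.mem_range.2 (by omega))]

lemma pscomp_X {g : PowerSeries A} (hg : constantCoeff g = 0) : pscomp A X g = g := by
  ext n
  rw [coeff_pscomp]
  have : ∀ k ∈ range (n + 1), coeff k (X : PowerSeries A) * coeff n (g ^ k)
      = if k = 1 then coeff n (g ^ 1) else 0 := by
    intro k _
    rw [PowerSeries.coeff_X]
    split
    · rename_i h; subst h; simp
    · simp
  rw [Finset.sum_congr rfl this, Finset.sum_ite_eq' (range (n + 1)) 1 _]
  split
  · simp
  · rename_i hmem
    have hn : n = 0 := by simp only [Finset.mem_range] at hmem; omega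
    subst hn
    simpa using hg.symm

lemma pscomp_mul {g : PowerSeries A} (hg : constantCoeff g = 0)
    (f₁ f₂ : PowerSeries A) :
    pscomp A (f₁ * f₂) g = pscomp A f₁ g * pscomp A f₂ g := by
  ext n
  rw [coeff_pscomp, PowerSeries.coeff_mul]
  have lhs : ∑ k ∈ range (n + 1), coeff k (f₁ * f₂) * coeff n (g ^ k)
      = ∑ k ∈ range (n + 1), ∑ p ∈ Finset.HasAntidiagonal.antidiagonal k,
          coeff p.1 f₁ * coeff p.2 f₂ * coeff n (g ^ p.1 * g ^ p.2) := by
    apply Finset.sum_congr rfl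
    intro k _
    rw [PowerSeries.coeff_mul, Finset.sum_mul]
    apply Finset.sum_congr rfl
    intro p hp
    rw [← pow_add, Finset.HasAntidiagonal.mem_antidiagonal.1 hp]
  have key : ∑ k ∈ range (n + 1), ∑ p ∈ Finset.HasAntidiagonal.antidiagonal k,
        coeff p.1 f₁ * coeff p.2 f₂ * coeff n (g ^ p.1 * g ^ p.2)
      = ∑ p ∈ range (n + 1) ×ˢ range (n + 1),
          coeff p.1 f₁ * coeff p.2 f₂ * coeff n (g ^ p.1 * g ^ p.2) :=
    sum_range_antidiagonal n _ (fun p h => by rw [cppz hg hg h, mul_zero])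
  rw [lhs, key]
  have rhs : ∑ q ∈ Finset.HasAntidiagonal.antidiagonal n,
        coeff q.1 (pscomp A f₁ g) * coeff q.2 (pscomp A f₂ g)
      = ∑ q ∈ Finset.HasAntidiagonal.antidiagonal n, ∑ p ∈ range (n + 1) ×ˢ range (n + 1),
          coeff p.1 f₁ * coeff q.1 (g ^ p.1)
            * (coeff p.2 f₂ * coeff q.2 (g ^ p.2)) := by
    apply Finset.sum_congr rfl
    intro q hq
    have hq' := Finset.HasAntidiagonal.mem_antidiagonal.1 hq
    rw [coeff_pscomp_ext f₁ hg (show q.1 ≤ n by omega),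
      coeff_pscomp_ext f₂ hg (show q.2 ≤ n by omega), Finset.sum_mul_sum,
      ← Finset.sum_product']
  rw [rhs, Finset.sum_comm]
  apply Finset.sum_congr rfl
  intro p _
  rw [PowerSeries.coeff_mul, Finset.mul_sum]
  apply Finset.sum_congr rfl
  intro q _
  ring

lemma pscomp_pow {g : PowerSeries A} (hg : constantCoeff g = 0)
    (f : PowerSeries A) (r : ℕ) :
    pscomp A (f ^ r) g = (pscomp A f g) ^ r := by
  induction r with
  | zero => simpa using pscomp_one g
  | succ r ih => rw [pow_succ, pow_succ, pscomp_mul hg, ih]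

end Helpers2

section Helpers3
variable {A : Type} [CommRing A]

lemma Fsub_split {a : ℕ → ℕ → A} (hFGL : IsFGL A a) {f g : PowerSeries A}
    (hf : constantCoeff f = 0) (hg : constantCoeff g = 0) :
    Fsub A a f g = f + g + f * g * Fsub A (fun k j => a (k + 1) (j + 1)) f g := by
  ext n
  rw [map_add, map_add, coeff_Fsub]
  have hthird : coeff n (f * g * Fsub A (fun k j => a (k + 1) (j + 1)) f g)
      = ∑ k ∈ range (n + 1), ∑ j ∈ range (n + 1),
          a (k + 1) (j + 1) * coeff n (f ^ (k + 1) * g ^ (j + 1)) := by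
    rw [PowerSeries.coeff_mul]
    have step : ∀ q ∈ Finset.HasAntidiagonal.antidiagonal n,
        coeff q.1 (f * g) * coeff q.2 (Fsub A (fun k j => a (k + 1) (j + 1)) f g)
        = ∑ k ∈ range (n + 1), ∑ j ∈ range (n + 1),
            a (k + 1) (j + 1) * (coeff q.1 (f * g) * coeff q.2 (f ^ k * g ^ j)) := by
      intro q hq
      have hq' := Finset.HasAntidiagonal.mem_antidiagonal.1 hq
      rw [coeff_Fsub_ext _ hf hg (show q.2 ≤ n by omega), Finset.mul_sum]
      apply Finset.sum_congr rfl; intro k _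
      rw [Finset.mul_sum]
      apply Finset.sum_congr rfl; intro j _
      ring
    rw [Finset.sum_congr rfl step, Finset.sum_comm]
    apply Finset.sum_congr rfl; intro k _
    rw [Finset.sum_comm]
    apply Finset.sum_congr rfl; intro j _
    rw [← Finset.mul_sum, ← PowerSeries.coeff_mul]
    congr 1
    ring
  rw [hthird]
  have e1 : ∑ k ∈ range (n + 1), ∑ j ∈ range (n + 1), a k j * coeff n (f ^ k * g ^ j)
      = (∑ k ∈ range n, ∑ j ∈ range (n + 1),
          a (k + 1) j * coeff n (f ^ (k + 1) * g ^ j))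
        + ∑ j ∈ range (n + 1), a 0 j * coeff n (f ^ 0 * g ^ j) :=
    Finset.sum_range_succ' _ n
  have e2 : ∑ j ∈ range (n + 1), a 0 j * coeff n (f ^ 0 * g ^ j) = coeff n g := by
    have h : ∀ j ∈ range (n + 1), a 0 j * coeff n (f ^ 0 * g ^ j)
        = if j = 1 then coeff n (g ^ j) else 0 := by
      intro j _
      rw [hFGL.2.1 j]
      split <;> simp
    rw [Finset.sum_congr rfl h, Finset.sum_ite_eq' (range (n + 1)) 1 _]
    split
    · simp
    · rename_i hmem
      have : n = 0 := by simp only [Finset.mem_range] at hmem; omega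
      subst this
      simpa using hg.symm
  have e3 : ∀ k ∈ range n, ∑ j ∈ range (n + 1), a (k + 1) j * coeff n (f ^ (k + 1) * g ^ j)
      = (∑ j ∈ range n, a (k + 1) (j + 1) * coeff n (f ^ (k + 1) * g ^ (j + 1)))
        + a (k + 1) 0 * coeff n (f ^ (k + 1) * g ^ 0) :=
    fun k _ => Finset.sum_range_succ' _ n
  have e4 : ∑ k ∈ range n, a (k + 1) 0 * coeff n (f ^ (k + 1) * g ^ 0) = coeff n f := by
    have h : ∀ k ∈ range n, a (k + 1) 0 * coeff n (f ^ (k + 1) * g ^ 0)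
        = if k = 0 then coeff n (f ^ (k + 1) * g ^ 0) else 0 := by
      intro k _
      rw [hFGL.1 (k + 1)]
      rcases k with _ | k <;> simp
    rw [Finset.sum_congr rfl h, Finset.sum_ite_eq' (range n) 0 _]
    split
    · simp
    · rename_i hmem
      have : n = 0 := by simp only [Finset.mem_range] at hmem; omega
      subst this
      simpa using hf.symm
  have e5 : ∑ k ∈ range n, ∑ j ∈ range n,
        a (k + 1) (j + 1) * coeff n (f ^ (k + 1) * g ^ (j + 1))
      = ∑ k ∈ range (n + 1), ∑ j ∈ range (n + 1),
          a (k + 1) (j + 1) * coeff n (f ^ (k + 1) * g ^ (j + 1)) := by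
    rw [← Finset.sum_product', ← Finset.sum_product']
    apply Finset.sum_subset (Finset.product_subset_product
      (Finset.range_subset_range.2 (by omega)) (Finset.range_subset_range.2 (by omega)))
    intro p hp hp'
    have hlt : n < (p.1 + 1) + (p.2 + 1) := by
      simp only [Finset.mem_product, Finset.mem_range] at hp hp'
      omega
    rw [cppz hf hg hlt, mul_zero]
  rw [e1, e2, Finset.sum_congr rfl e3, Finset.sum_add_distrib, e4, ← e5]
  ring

end Helpers3

section Helpers4
variable {A : Type} [CommRing A]

lemma pscomp_Fsub {a : ℕ → ℕ → A} {f h g : PowerSeries A}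
    (hf : constantCoeff f = 0) (hh : constantCoeff h = 0)
    (hg : constantCoeff g = 0) :
    pscomp A (Fsub A a f h) g = Fsub A a (pscomp A f g) (pscomp A h g) := by
  ext n
  rw [coeff_pscomp, coeff_Fsub]
  have step : ∀ k ∈ range (n + 1), coeff k (Fsub A a f h) * coeff n (g ^ k)
      = ∑ r ∈ range (n + 1), ∑ s ∈ range (n + 1),
          a r s * (coeff k (f ^ r * h ^ s) * coeff n (g ^ k)) := by
    intro k hk
    rw [coeff_Fsub_ext a hf hh (show k ≤ n by
      simp only [Finset.mem_range] at hk; omega), Finset.sum_mul]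
    refine Finset.sum_congr rfl fun r _ => ?_
    rw [Finset.sum_mul]
    refine Finset.sum_congr rfl fun s _ => ?_
    ring
  rw [Finset.sum_congr rfl step, Finset.sum_comm]
  refine Finset.sum_congr rfl fun r _ => ?_
  rw [Finset.sum_comm]
  refine Finset.sum_congr rfl fun s _ => ?_
  rw [← Finset.mul_sum]
  congr 1
  rw [← coeff_pscomp, pscomp_mul hg, pscomp_pow hg, pscomp_pow hg]

lemma nser_mul {a : ℕ → ℕ → A} (hFGL : IsFGL A a) (m i : ℕ) :
    nser A a (m * i) = pscomp A (nser A a m) (nser A a i) := by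
  induction m with
  | zero =>
    rw [Nat.zero_mul]
    show (nser A a 0) = _
    rw [show nser A a 0 = 0 from rfl]
    exact (pscomp_zero _).symm
  | succ m ih =>
    have e : (m + 1) * i = m * i + i := by ring
    rw [e, nser_add hFGL, ih]
    show Fsub A a (pscomp A (nser A a m) (nser A a i)) (nser A a i)
      = pscomp A (Fsub A a (nser A a m) X) (nser A a i)
    rw [pscomp_Fsub (constantCoeff_nser hFGL m) PowerSeries.constantCoeff_X
      (constantCoeff_nser hFGL i), pscomp_X (constantCoeff_nser hFGL i)]

lemma nser_kp {a : ℕ → ℕ → A} (hFGL : IsFGL A a) (p : ℕ) (k : ℕ) :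
    ∃ G : PowerSeries A, nser A a (k * p) = nser A a p * G
      ∧ constantCoeff G = (k : A) := by
  induction k with
  | zero => exact ⟨0, by simp [show nser A a 0 = 0 from rfl], by simp⟩
  | succ k ih =>
    obtain ⟨G, hG, hGc⟩ := ih
    have hW : constantCoeff (nser A a (k * p)) = 0 := constantCoeff_nser hFGL _
    have hP : constantCoeff (nser A a p) = 0 := constantCoeff_nser hFGL _
    refine ⟨G + 1 + nser A a (k * p)
        * Fsub A (fun r s => a (r + 1) (s + 1)) (nser A a (k * p)) (nser A a p), ?_, ?_⟩
    · have e : (k + 1) * p = k * p + p := by ring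
      rw [e, nser_add hFGL, Fsub_split hFGL hW hP]
      rw [hG]
      ring
    · simp [hGc, hW]

end Helpers4


open MvPolynomial

/-- Generators of the presented `MU_*`-algebra model `R` of `MU^{C_p}_*`:
`u`, `d_{l,j}^{(i)}` (written `d i l j`), `η_i`, `q_j`. -/
inductive Gen : Type
  | u : Gen
  | d : ℕ → ℕ → ℕ → Gen
  | eta : ℕ → Gen
  | q : ℕ → Gen

/-- The defining relations of `R` (Theorem 3.1): for `1 ≤ i ≤ p-1` and `l, j ≥ 0`,
`d_{l,j}^{(i)} − t_{l,j}^{(i)} = u·d_{l,j+1}^{(i)}`;  `d_{0,j}^{(1)} = 0`;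
`q_j − c_j = u·q_{j+1}`;  `q₀ = 0`;  `η₁ = 1`;
`η_i(u·d_{0,0}^{(i)} + i⁻¹) = 1 + k_i·q₁`;  `η_i·q₁ = i·q₁`. -/
def rels (MU : Type) [CommRing MU] (p : ℕ) (t : ℕ → ℕ → ℕ → MU) (c : ℕ → MU)
    (inv kk : ℕ → ℕ) : Set (MvPolynomial Gen MU) :=
  {r | (∃ i l j, 1 ≤ i ∧ i ≤ p - 1 ∧
          r = X (Gen.d i l j) - MvPolynomial.C (t i l j) - X Gen.u * X (Gen.d i l (j + 1))) ∨
       (∃ j, r = X (Gen.d 1 0 j)) ∨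
       (∃ j, r = X (Gen.q j) - MvPolynomial.C (c j) - X Gen.u * X (Gen.q (j + 1))) ∨
       r = X (Gen.q 0) ∨
       r = X (Gen.eta 1) - 1 ∨
       (∃ i, 1 ≤ i ∧ i ≤ p - 1 ∧
          r = X (Gen.eta i) * (X Gen.u * X (Gen.d i 0 0) + MvPolynomial.C ((inv i : MU)))
              - 1 - MvPolynomial.C ((kk i : MU)) * X (Gen.q 1)) ∨
       (∃ i, 1 ≤ i ∧ i ≤ p - 1 ∧
          r = X (Gen.eta i) * X (Gen.q 1) - MvPolynomial.C ((i : MU)) * X (Gen.q 1))}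

/-- The presented `MU_*`-algebra `R ≅ MU^{C_p}_*`. -/
abbrev Rring (MU : Type) [CommRing MU] (p : ℕ) (t : ℕ → ℕ → ℕ → MU) (c : ℕ → MU)
    (inv kk : ℕ → ℕ) : Type :=
  MvPolynomial Gen MU ⧸ Ideal.span (rels MU p t c inv kk)

variable {MU : Type} [CommRing MU]

/-- The image of a generator in `R`. -/
noncomputable def gen (MU : Type) [CommRing MU] (p : ℕ) (t : ℕ → ℕ → ℕ → MU)
    (c : ℕ → MU) (inv kk : ℕ → ℕ) (g : Gen) : Rring MU p t c inv kk :=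
  Ideal.Quotient.mk (Ideal.span (rels MU p t c inv kk)) (X g)

/-- The series `f_i(u) = Σ_{j≥0} a^{(m)}_{0,j+1}([i](u))^j` with `m = i⁻¹`. -/
noncomputable def fser (A : Type) [CommRing A] (a : ℕ → ℕ → A) (i m : ℕ) :
    PowerSeries A :=
  PowerSeries.mk fun n => ∑ j ∈ Finset.range (n + 1),
    PowerSeries.coeff (j + 1) (nser A a m) * PowerSeries.coeff n (nser A a i ^ j)

section Helpers5
variable {A : Type} [CommRing A]

lemma nser_mul_fser {a : ℕ → ℕ → A} (hFGL : IsFGL A a) (i m : ℕ) :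
    nser A a i * fser A a i m = pscomp A (nser A a m) (nser A a i) := by
  have hg : constantCoeff (nser A a i) = 0 := constantCoeff_nser hFGL i
  have hm : constantCoeff (nser A a m) = 0 := constantCoeff_nser hFGL m
  ext n
  rw [coeff_pscomp, Finset.sum_range_succ', mul_comm, PowerSeries.coeff_mul]
  have key : ∀ q ∈ Finset.HasAntidiagonal.antidiagonal n,
      coeff q.1 (fser A a i m) * coeff q.2 (nser A a i)
      = ∑ j ∈ range n, coeff (j + 1) (nser A a m)
          * (coeff q.1 (nser A a i ^ j) * coeff q.2 (nser A a i)) := by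
    intro q hq
    have hq' := Finset.HasAntidiagonal.mem_antidiagonal.1 hq
    by_cases h2 : q.2 = 0
    · rw [h2, coeff_zero_eq_constantCoeff_apply, hg, mul_zero]
      symm
      apply Finset.sum_eq_zero
      intro j _
      simp
    · have hfq : coeff q.1 (fser A a i m)
          = ∑ j ∈ range n, coeff (j + 1) (nser A a m) * coeff q.1 (nser A a i ^ j) := by
        rw [fser, coeff_mk]
        apply Finset.sum_subset (Finset.range_subset_range.2 (by omega))
        intro j hj hj'
        simp only [Finset.mem_range] at hj hj'
        rw [cpz hg (by omega), mul_zero]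
      rw [hfq, Finset.sum_mul]
      exact Finset.sum_congr rfl fun j _ => by ring
  rw [Finset.sum_congr rfl key, Finset.sum_comm]
  have h0 : coeff 0 (nser A a m) * coeff n (nser A a i ^ 0) = 0 := by
    rw [coeff_zero_eq_constantCoeff_apply, hm, zero_mul]
  rw [h0, add_zero]
  refine Finset.sum_congr rfl fun k _ => ?_
  rw [pow_succ, PowerSeries.coeff_mul, Finset.mul_sum]


end Helpers5

/-- The generator assignment at the power-series level. -/
noncomputable def PhiGen (MU : Type) [CommRing MU] (a : ℕ → ℕ → MU)
    (t : ℕ → ℕ → ℕ → MU) (c : ℕ → MU) : Gen → PowerSeries MU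
  | Gen.u => PowerSeries.X
  | Gen.d i l j => PowerSeries.mk fun k => t i l (j + k)
  | Gen.q j => PowerSeries.mk fun k => c (j + k)
  | Gen.eta i => PowerSeries.mk fun k => PowerSeries.coeff (1 + k) (nser MU a i)

/-- the assignments `ρ(u) = u`, `ρ(d_{l,j}^{(i)}) = Σ_k t_{l,j+k}^{(i)} u^k`,
`ρ(q_j) = Σ_k c_{j+k} u^k`, `ρ(η_i) = Σ_k a_{0,1+k}^{(i)} u^k` define a well-defined
`MU_*`-algebra homomorphism `ρ : R → MU_*[[u]]/([p]u)`, i.e. they satisfy all seven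
defining relations of `R`.  Here `MU_*` carries a formal group law `a`, `c_j` is the
`j`-th coefficient of the `p`-series, and the `0`-th row `t_{0,•}^{(i)}` (together with
`t_{0,−1}^{(i)} = i⁻¹`) consists of the coefficients of `f_i(u)`, so that
`([i]u)⁻¹ = u⁻¹ f_i(u)` modulo `[p]u`. -/
theorem stmt_9 (MU : Type) [CommRing MU] (a : ℕ → ℕ → MU) (hFGL : IsFGL MU a)
    (p : ℕ) (hp : p.Prime)
    (t : ℕ → ℕ → ℕ → MU) (c : ℕ → MU) (inv kk : ℕ → ℕ)
    (hc : ∀ j, c j = PowerSeries.coeff j (nser MU a p))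
    (hinv : ∀ i, 1 ≤ i → i ≤ p - 1 →
      1 ≤ inv i ∧ inv i ≤ p - 1 ∧ i * inv i = 1 + kk i * p)
    (hti : ∀ i, 1 ≤ i → i ≤ p - 1 →
      PowerSeries.C ((inv i : MU)) +
        PowerSeries.X * PowerSeries.mk (fun k => t i 0 k) = fser MU a i (inv i)) :
    ∃ ρ : Rring MU p t c inv kk →ₐ[MU]
        (PowerSeries MU ⧸ Ideal.span {nser MU a p}),
      ρ (gen MU p t c inv kk Gen.u) =
        Ideal.Quotient.mk (Ideal.span {nser MU a p}) PowerSeries.X ∧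
      (∀ i l j, 1 ≤ i → i ≤ p - 1 →
        ρ (gen MU p t c inv kk (Gen.d i l j)) =
          Ideal.Quotient.mk (Ideal.span {nser MU a p})
            (PowerSeries.mk fun k => t i l (j + k))) ∧
      (∀ j, ρ (gen MU p t c inv kk (Gen.q j)) =
          Ideal.Quotient.mk (Ideal.span {nser MU a p})
            (PowerSeries.mk fun k => c (j + k))) ∧
      (∀ i, 1 ≤ i → i ≤ p - 1 →
        ρ (gen MU p t c inv kk (Gen.eta i)) =
          Ideal.Quotient.mk (Ideal.span {nser MU a p})
            (PowerSeries.mk fun k => PowerSeries.coeff (1 + k) (nser MU a i))) := by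
  classical
  set P : PowerSeries MU := nser MU a p with hPdef
  set I : Ideal (PowerSeries MU) := Ideal.span {P} with hIdef
  have hPmem : P ∈ I := Ideal.subset_span rfl
  have hPc : PowerSeries.constantCoeff P = 0 := constantCoeff_nser hFGL p
  -- the algebra hom on the polynomial ring
  set Φ : Gen → PowerSeries MU := PhiGen MU a t c with hΦdef
  set φ : MvPolynomial Gen MU →ₐ[MU] (PowerSeries MU ⧸ I) :=
    (Ideal.Quotient.mkₐ MU I).comp (MvPolynomial.aeval Φ) with hφdef
  -- t 1 0 k = 0
  have hp2 : 2 ≤ p := hp.two_le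
  have hinv1 : inv 1 = 1 := by
    obtain ⟨h1, h2, h3⟩ := hinv 1 (le_refl 1) (by omega)
    rw [one_mul] at h3
    rcases Nat.eq_zero_or_pos (kk 1) with hk | hk
    · rw [hk, zero_mul] at h3
      omega
    · have : p ≤ kk 1 * p := Nat.le_mul_of_pos_left p hk
      omega
  have hfser11 : fser MU a 1 1 = 1 := by
    ext n
    rw [fser, coeff_mk]
    have h : ∀ j ∈ range (n + 1),
        PowerSeries.coeff (j + 1) (nser MU a 1)
          * PowerSeries.coeff n (nser MU a 1 ^ j)
        = if j = 0 then PowerSeries.coeff n ((1 : PowerSeries MU)) else 0 := by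
      intro j _
      rw [nser_one hFGL, PowerSeries.coeff_X]
      split
      · rename_i hj
        rw [if_pos (by omega)]
        simp only [show j = 0 by omega, pow_zero, one_mul]
      · rw [if_neg (by omega)]
        simp
    rw [Finset.sum_congr rfl h, Finset.sum_ite_eq' (range (n + 1)) 0 _,
      if_pos (Finset.mem_range.2 (by omega))]
  have ht10 : ∀ k, t 1 0 k = 0 := by
    intro k
    have h := hti 1 (le_refl 1) (by omega)
    rw [hinv1, hfser11] at h
    have hC : (PowerSeries.C ((1 : ℕ) : MU)) = 1 := by
      rw [Nat.cast_one, map_one]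
    rw [hC] at h
    have h2 : (PowerSeries.X : PowerSeries MU)
        * PowerSeries.mk (fun k => t 1 0 k) = 0 := by
      linear_combination h
    have h3 := congrArg (PowerSeries.coeff (k + 1)) h2
    simpa [PowerSeries.coeff_succ_X_mul] using h3
  -- X * Q1 = P
  have hXQ : PowerSeries.X * PowerSeries.mk (fun k => c (1 + k)) = P := by
    ext n
    rcases n with _ | n
    · simp [hPc]
    · rw [PowerSeries.coeff_succ_X_mul, PowerSeries.coeff_mk, hc (1 + n),
        Nat.add_comm 1 n]
  -- vanishing on the relations
  have hker0 : ∀ r ∈ rels MU p t c inv kk, φ r = 0 := by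
    intro r hr
    have hφr : φ r = Ideal.Quotient.mk I (MvPolynomial.aeval Φ r) := by
      simp [hφdef, Ideal.Quotient.mkₐ_eq_mk]
    rw [hφr, Ideal.Quotient.eq_zero_iff_mem]
    simp only [rels, Set.mem_setOf_eq] at hr
    rcases hr with ⟨i, l, j, hi1, hi2, rfl⟩ | ⟨j, rfl⟩ | ⟨j, rfl⟩ | rfl | rfl |
      ⟨i, hi1, hi2, rfl⟩ | ⟨i, hi1, hi2, rfl⟩
    · -- relation 1 : d-relation
      simp only [map_sub, map_mul, MvPolynomial.aeval_X, MvPolynomial.aeval_C,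
        PowerSeries.algebraMap_apply, Algebra.algebraMap_self, RingHom.id_apply,
        hΦdef, PhiGen]
      have : (PowerSeries.mk fun k => t i l (j + k)) - PowerSeries.C (t i l j)
          - PowerSeries.X * PowerSeries.mk (fun k => t i l (j + 1 + k)) = 0 := by
        ext n
        rcases n with _ | n
        · simp
        · simp only [map_sub, PowerSeries.coeff_mk, PowerSeries.coeff_C,
            PowerSeries.coeff_succ_X_mul]
          rw [if_neg (by omega)]
          have hjj : j + (n + 1) = j + 1 + n := by omega
          rw [hjj]
          simp
      rw [this]
      exact I.zero_mem
    · -- relation 2 : d 1 0 j = 0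
      simp only [MvPolynomial.aeval_X, hΦdef, PhiGen]
      have : (PowerSeries.mk fun k => t 1 0 (j + k)) = 0 := by
        ext n
        simp [ht10]
      rw [this]
      exact I.zero_mem
    · -- relation 3 : q-relation
      simp only [map_sub, map_mul, MvPolynomial.aeval_X, MvPolynomial.aeval_C,
        PowerSeries.algebraMap_apply, Algebra.algebraMap_self, RingHom.id_apply,
        hΦdef, PhiGen]
      have : (PowerSeries.mk fun k => c (j + k)) - PowerSeries.C (c j)
          - PowerSeries.X * PowerSeries.mk (fun k => c (j + 1 + k)) = 0 := by
        ext n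
        rcases n with _ | n
        · simp
        · simp only [map_sub, PowerSeries.coeff_mk, PowerSeries.coeff_C,
            PowerSeries.coeff_succ_X_mul]
          rw [if_neg (by omega)]
          have hjj : j + (n + 1) = j + 1 + n := by omega
          rw [hjj]
          simp
      rw [this]
      exact I.zero_mem
    · -- relation 4 : q 0 = 0
      simp only [MvPolynomial.aeval_X, hΦdef, PhiGen]
      have : (PowerSeries.mk fun k => c (0 + k)) = P := by
        ext n
        rw [PowerSeries.coeff_mk, hc (0 + n), Nat.zero_add]
      rw [this]
      exact hPmem
    · -- relation 5 : eta 1 = 1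
      simp only [map_sub, map_one, MvPolynomial.aeval_X, hΦdef, PhiGen]
      have : (PowerSeries.mk fun k => PowerSeries.coeff (1 + k) (nser MU a 1))
          = 1 := by
        ext n
        rw [PowerSeries.coeff_mk, nser_one hFGL, PowerSeries.coeff_X,
          PowerSeries.coeff_one]
        rcases n with _ | n
        · simp
        · rw [if_neg (by omega), if_neg (by omega)]
      rw [this]
      simpa using I.zero_mem
    · -- relation 6 : the unit relation
      simp only [map_sub, map_mul, map_add, map_one, MvPolynomial.aeval_X,
        MvPolynomial.aeval_C, PowerSeries.algebraMap_apply, Algebra.algebraMap_self,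
        RingHom.id_apply, hΦdef, PhiGen]
      set E : PowerSeries MU :=
        PowerSeries.mk fun k => PowerSeries.coeff (1 + k) (nser MU a i) with hE
      set D : PowerSeries MU := PowerSeries.mk fun k => t i 0 (0 + k) with hD
      set Q1 : PowerSeries MU := PowerSeries.mk fun k => c (1 + k) with hQ1
      have hXE : PowerSeries.X * E = nser MU a i := by
        ext n
        rcases n with _ | n
        · simp [constantCoeff_nser hFGL i]
        · rw [PowerSeries.coeff_succ_X_mul, hE, PowerSeries.coeff_mk,
            Nat.add_comm 1 n]
      have hDfser : PowerSeries.X * D + PowerSeries.C ((inv i : MU))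
          = fser MU a i (inv i) := by
        have h := hti i hi1 hi2
        have hD' : D = PowerSeries.mk fun k => t i 0 k := by
          ext n; rw [hD, PowerSeries.coeff_mk, PowerSeries.coeff_mk, Nat.zero_add]
        rw [hD', ← h]
        ring
      have hcomp : nser MU a i * fser MU a i (inv i) = nser MU a (inv i * i) := by
        rw [nser_mul_fser hFGL i (inv i), nser_mul hFGL (inv i) i]
      have himi : inv i * i = 1 + kk i * p := by
        rw [Nat.mul_comm]
        exact (hinv i hi1 hi2).2.2
      obtain ⟨G, hG, hGc⟩ := nser_kp hFGL p (kk i)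
      set W : PowerSeries MU := nser MU a (kk i * p) with hWdef
      have hWc : PowerSeries.constantCoeff W = 0 := constantCoeff_nser hFGL _
      have hadd : nser MU a (1 + kk i * p) = Fsub MU a PowerSeries.X W := by
        rw [nser_add hFGL 1 (kk i * p), nser_one hFGL]
      set E₂ : PowerSeries MU :=
        Fsub MU (fun r s => a (r + 1) (s + 1)) PowerSeries.X W with hE₂
      have hFs : Fsub MU a PowerSeries.X W
          = PowerSeries.X + W + PowerSeries.X * W * E₂ :=
        Fsub_split hFGL PowerSeries.constantCoeff_X hWc
      have key : PowerSeries.X * (E * fser MU a i (inv i))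
          = PowerSeries.X * (1 + Q1 * (G + PowerSeries.X * (G * E₂))) := by
        have l1 : PowerSeries.X * (E * fser MU a i (inv i))
            = (PowerSeries.X * E) * fser MU a i (inv i) := by ring
        rw [l1, hXE, hcomp, himi, hadd, hFs, hG, ← hPdef, ← hXQ]
        ring
      have hEfser : E * fser MU a i (inv i)
          = 1 + Q1 * (G + PowerSeries.X * (G * E₂)) := _root_.X_mul_cancel key
      have hKc : PowerSeries.constantCoeff
          (G + PowerSeries.X * (G * E₂) - PowerSeries.C ((kk i : MU))) = 0 := by
        simp [hGc]
      have hexpr : E * (PowerSeries.X * D + PowerSeries.C ((inv i : MU))) - 1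
          - PowerSeries.C ((kk i : MU)) * Q1
          = P * shiftPS MU (G + PowerSeries.X * (G * E₂)
              - PowerSeries.C ((kk i : MU))) := by
        rw [hDfser, hEfser, ← hXQ]
        have hrw : (PowerSeries.X * Q1) * shiftPS MU (G + PowerSeries.X * (G * E₂)
              - PowerSeries.C ((kk i : MU)))
            = Q1 * (PowerSeries.X * shiftPS MU (G + PowerSeries.X * (G * E₂)
              - PowerSeries.C ((kk i : MU)))) := by ring
        rw [hrw, X_mul_shiftPS hKc]
        ring
      rw [hexpr]
      exact Ideal.mul_mem_right _ I hPmem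
    · -- relation 7
      simp only [map_sub, map_mul, MvPolynomial.aeval_X, MvPolynomial.aeval_C,
        PowerSeries.algebraMap_apply, Algebra.algebraMap_self, RingHom.id_apply,
        hΦdef, PhiGen]
      set E : PowerSeries MU :=
        PowerSeries.mk fun k => PowerSeries.coeff (1 + k) (nser MU a i) with hE
      set Q1 : PowerSeries MU := PowerSeries.mk fun k => c (1 + k) with hQ1
      have hEc : PowerSeries.constantCoeff E = (i : MU) := by
        rw [hE, ← PowerSeries.coeff_zero_eq_constantCoeff_apply,
          PowerSeries.coeff_mk]
        exact coeff_one_nser hFGL i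
      have hSc : PowerSeries.constantCoeff
          (E - PowerSeries.C ((i : MU))) = 0 := by
        simp [hEc]
      have hexpr : E * Q1 - PowerSeries.C ((i : MU)) * Q1
          = P * shiftPS MU (E - PowerSeries.C ((i : MU))) := by
        rw [← hXQ]
        have hrw : (PowerSeries.X * Q1) * shiftPS MU (E - PowerSeries.C ((i : MU)))
            = Q1 * (PowerSeries.X * shiftPS MU (E - PowerSeries.C ((i : MU)))) := by
          ring
        rw [hrw, X_mul_shiftPS hSc]
        ring
      rw [hexpr]
      exact Ideal.mul_mem_right _ I hPmem
  -- build the lift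
  have hvanish : ∀ r ∈ Ideal.span (rels MU p t c inv kk), φ r = 0 := by
    have hle : Ideal.span (rels MU p t c inv kk)
        ≤ RingHom.ker (φ : MvPolynomial Gen MU →+* (PowerSeries MU ⧸ I)) :=
      Ideal.span_le.2 fun r hr => RingHom.mem_ker.2 (hker0 r hr)
    exact fun r hr => RingHom.mem_ker.1 (hle hr)
  refine ⟨Ideal.Quotient.liftₐ _ φ hvanish, ?_, ?_, ?_, ?_⟩
  · show Ideal.Quotient.liftₐ _ φ hvanish
        (Ideal.Quotient.mk _ (MvPolynomial.X Gen.u)) = _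
    rw [Ideal.Quotient.liftₐ_apply]; erw [Ideal.Quotient.lift_mk]
    simp [hφdef, Ideal.Quotient.mkₐ_eq_mk, hΦdef, PhiGen]
  · intro i l j _ _
    show Ideal.Quotient.liftₐ _ φ hvanish
        (Ideal.Quotient.mk _ (MvPolynomial.X (Gen.d i l j))) = _
    rw [Ideal.Quotient.liftₐ_apply]; erw [Ideal.Quotient.lift_mk]
    simp [hφdef, Ideal.Quotient.mkₐ_eq_mk, hΦdef, PhiGen]
  · intro j
    show Ideal.Quotient.liftₐ _ φ hvanish
        (Ideal.Quotient.mk _ (MvPolynomial.X (Gen.q j))) = _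
    rw [Ideal.Quotient.liftₐ_apply]; erw [Ideal.Quotient.lift_mk]
    simp [hφdef, Ideal.Quotient.mkₐ_eq_mk, hΦdef, PhiGen]
  · intro i _ _
    show Ideal.Quotient.liftₐ _ φ hvanish
        (Ideal.Quotient.mk _ (MvPolynomial.X (Gen.eta i))) = _
    rw [Ideal.Quotient.liftₐ_apply]; erw [Ideal.Quotient.lift_mk]
    simp [hφdef, Ideal.Quotient.mkₐ_eq_mk, hΦdef, PhiGen]
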